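/- Two-variable wandering subspace property: let (T₁, T₂) be a pair of doubly commuting analytic 2-isometries on a complex Hilbert space H. Then H equals the closed linear span of ⋃_{m≥0, n≥0} T₁^m T₂ⁿ(E), where E := ker T₁* ∩ ker T₂*. -/

import Mathlib

open ContinuousLinearMap
open scoped InnerProductSpace

section OneVar

variable {H : Type*} [NormedAddCommGroup H] [InnerProductSpace ℂ H] [CompleteSpace H]

private lemma pow_apply_succ (T : H →L[ℂ] H) (n : ℕ) (y : H) :
    (T ^ (n + 1)) y = T ((T ^ n) y) := by
  rw [pow_succ', ContinuousLinearMap.mul_apply]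

private lemma pow_apply_succ' (T : H →L[ℂ] H) (n : ℕ) (y : H) :
    (T ^ (n + 1)) y = (T ^ n) (T y) := by
  rw [pow_succ, ContinuousLinearMap.mul_apply]

private lemma twoIso_pow_norm_sq (T : H →L[ℂ] H)
    (h2 : ∀ h : H, ‖T (T h)‖ ^ 2 - 2 * ‖T h‖ ^ 2 + ‖h‖ ^ 2 = 0) (h : H) :
    ∀ n : ℕ, ‖(T ^ n) h‖ ^ 2 = ‖h‖ ^ 2 + n * (‖T h‖ ^ 2 - ‖h‖ ^ 2) := by
  have step : ∀ n : ℕ, ‖(T ^ (n + 1)) h‖ ^ 2 - ‖(T ^ n) h‖ ^ 2 = ‖T h‖ ^ 2 - ‖h‖ ^ 2 := by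
    intro n
    induction n with
    | zero => simp [pow_apply_succ T 0 h]
    | succ n ih =>
      have key := h2 ((T ^ n) h)
      have e1 : (T ^ (n + 1)) h = T ((T ^ n) h) := pow_apply_succ T n h
      have e2 : (T ^ (n + 2)) h = T (T ((T ^ n) h)) := by
        rw [pow_apply_succ T (n + 1) h, e1]
      rw [show n + 1 + 1 = n + 2 from rfl, e2, e1]
      rw [e1] at ih
      linarith
  intro n
  induction n with
  | zero => simp
  | succ n ih =>
    have := step n
    rw [Nat.cast_succ]
    nlinarith [ih]

private lemma twoIso_expansive (T : H →L[ℂ] H)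
    (h2 : ∀ h : H, ‖T (T h)‖ ^ 2 - 2 * ‖T h‖ ^ 2 + ‖h‖ ^ 2 = 0) (h : H) :
    ‖h‖ ^ 2 ≤ ‖T h‖ ^ 2 := by
  by_contra hlt
  push_neg at hlt
  have hd : 0 < ‖h‖ ^ 2 - ‖T h‖ ^ 2 := by linarith
  obtain ⟨n, hn⟩ := exists_nat_gt (‖h‖ ^ 2 / (‖h‖ ^ 2 - ‖T h‖ ^ 2))
  have h0 : (0 : ℝ) ≤ ‖(T ^ n) h‖ ^ 2 := sq_nonneg _
  rw [twoIso_pow_norm_sq T h2 h n] at h0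
  have := (div_lt_iff₀ hd).mp hn
  nlinarith

private lemma twoIso_pow_lower (T : H →L[ℂ] H)
    (h2 : ∀ h : H, ‖T (T h)‖ ^ 2 - 2 * ‖T h‖ ^ 2 + ‖h‖ ^ 2 = 0) (m : ℕ) (y : H) :
    ‖y‖ ≤ ‖(T ^ m) y‖ := by
  have h1 := twoIso_pow_norm_sq T h2 y m
  have h3 := twoIso_expansive T h2 y
  have h4 : ‖y‖ ^ 2 ≤ ‖(T ^ m) y‖ ^ 2 := by nlinarith [Nat.cast_nonneg (α := ℝ) m]
  nlinarith [norm_nonneg y, norm_nonneg ((T ^ m) y)]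

private lemma twoIso_pow_range_closed (T : H →L[ℂ] H)
    (h2 : ∀ h : H, ‖T (T h)‖ ^ 2 - 2 * ‖T h‖ ^ 2 + ‖h‖ ^ 2 = 0) (m : ℕ) :
    IsClosed (Set.range ⇑(T ^ m)) := by
  have hb : ∀ y : H, ‖y‖ ≤ (1 : NNReal) * ‖(T ^ m) y‖ := by
    intro y; simpa using twoIso_pow_lower T h2 m y
  exact (ContinuousLinearMap.antilipschitz_of_bound (T ^ m) hb).isClosed_range
    (T ^ m).uniformContinuous

/-- Richter's wandering subspace theorem for analytic 2-isometries
(via Shimorin-type arguments). -/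
theorem richter_wandering (T : H →L[ℂ] H)
    (h2 : ∀ h : H, ‖T (T h)‖ ^ 2 - 2 * ‖T h‖ ^ 2 + ‖h‖ ^ 2 = 0)
    (hana : (⨅ n : ℕ, LinearMap.range ((T ^ n : H →L[ℂ] H) : H →ₗ[ℂ] H)) = ⊥) :
    (⨆ n : ℕ, (LinearMap.ker ((adjoint T : H →L[ℂ] H) : H →ₗ[ℂ] H)).map ((T ^ n : H →L[ℂ] H) : H →ₗ[ℂ] H)).topologicalClosure = ⊤ := by
  rw [Submodule.topologicalClosure_eq_top_iff, Submodule.eq_bot_iff]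
  intro x hx
  have hx' : ∀ v ∈ (⨆ n : ℕ, (LinearMap.ker ((adjoint T : H →L[ℂ] H) : H →ₗ[ℂ] H)).map (((T ^ n) : H →L[ℂ] H) : H →ₗ[ℂ] H)),
      ⟪v, x⟫_ℂ = 0 := (Submodule.mem_orthogonal _ x).mp hx
  have hexp : ∀ h : H, ‖h‖ ^ 2 ≤ ‖T h‖ ^ 2 := twoIso_expansive T h2
  -- S = T* T is bijective
  set S : H →L[ℂ] H := adjoint T ∘L T with hSdef
  have hSinner : ∀ h : H, ⟪S h, h⟫_ℂ = ((‖T h‖ : ℂ)) ^ 2 := by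
    intro h
    rw [hSdef, ContinuousLinearMap.comp_apply, ContinuousLinearMap.adjoint_inner_left,
      inner_self_eq_norm_sq_to_K]
    norm_num
  have hSnorm : ∀ h : H, ‖h‖ ≤ ‖S h‖ := by
    intro h
    have h1 : ‖⟪S h, h⟫_ℂ‖ = ‖T h‖ ^ 2 := by
      rw [hSinner]; simp [norm_pow]
    have h2' : ‖⟪S h, h⟫_ℂ‖ ≤ ‖S h‖ * ‖h‖ := norm_inner_le_norm _ _
    have h3 : ‖h‖ ^ 2 ≤ ‖S h‖ * ‖h‖ := by rw [h1] at h2'; linarith [hexp h]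
    rcases eq_or_lt_of_le (norm_nonneg h) with hz | hz
    · rw [← hz]; exact norm_nonneg _
    · have := (mul_le_mul_iff_left₀ hz).mp (by nlinarith : ‖h‖ * ‖h‖ ≤ ‖S h‖ * ‖h‖)
      exact this
  have hSker : LinearMap.ker (S : H →ₗ[ℂ] H) = ⊥ := by
    rw [Submodule.eq_bot_iff]
    intro y hy
    have h0 : S y = 0 := hy
    have h1 := hSnorm y
    rw [h0, norm_zero] at h1
    exact norm_le_zero_iff.mp h1
  have hSclosed : IsClosed ((LinearMap.range (S : H →ₗ[ℂ] H) : Submodule ℂ H) : Set H) := by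
    have hb : ∀ y : H, ‖y‖ ≤ (1 : NNReal) * ‖S y‖ := by intro y; simpa using hSnorm y
    have := (ContinuousLinearMap.antilipschitz_of_bound S hb).isClosed_range S.uniformContinuous
    simpa [LinearMap.coe_range] using this
  have hSrange : LinearMap.range (S : H →ₗ[ℂ] H) = ⊤ := by
    have horth : (LinearMap.range ((S : H →L[ℂ] H) : H →ₗ[ℂ] H))ᗮ = ⊥ := by
      rw [Submodule.eq_bot_iff]
      intro y hy
      have h0 : ⟪S y, y⟫_ℂ = 0 :=
        (Submodule.mem_orthogonal _ y).mp hy (S y) (LinearMap.mem_range_self _ y)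
      rw [hSinner] at h0
      have : ‖T y‖ ^ 2 = 0 := by exact_mod_cast h0
      have hy2 := hexp y
      have : ‖y‖ = 0 := by nlinarith [norm_nonneg y]
      exact norm_eq_zero.mp this
    have hcl := Submodule.topologicalClosure_eq_top_iff.mpr horth
    have heq : (LinearMap.range ((S : H →L[ℂ] H) : H →ₗ[ℂ] H)).topologicalClosure
        = LinearMap.range ((S : H →L[ℂ] H) : H →ₗ[ℂ] H) :=
      le_antisymm (Submodule.topologicalClosure_minimal _ le_rfl hSclosed)
        (Submodule.le_topologicalClosure _)
    rw [heq] at hcl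
    exact hcl

  -- the operator L = S⁻¹ T*
  set e : H ≃L[ℂ] H := ContinuousLinearEquiv.ofBijective S hSker hSrange with hedef
  have he_apply : ∀ z : H, e z = S z := fun z => rfl
  have he : ∀ z : H, S (e.symm z) = z := by
    intro z
    rw [← he_apply]
    exact e.apply_symm_apply z
  set L : H →L[ℂ] H := e.symm.toContinuousLinearMap ∘L adjoint T with hLdef
  have hL_apply : ∀ z : H, L z = e.symm (adjoint T z) := fun z => rfl
  have hLT : ∀ z : H, L (T z) = z := by
    intro z
    rw [hL_apply]
    have h1 : adjoint T (T z) = S z := rfl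
    rw [h1, ← he_apply]
    exact e.symm_apply_apply z
  have hSL : ∀ z : H, S (L z) = adjoint T z := by
    intro z
    rw [hL_apply]
    exact he _
  have hTstarP : ∀ z : H, adjoint T (z - T (L z)) = 0 := by
    intro z
    have h1 : adjoint T (T (L z)) = S (L z) := rfl
    rw [map_sub, h1, hSL, sub_self]
  have hPmem : ∀ z : H, z - T (L z) ∈ LinearMap.ker ((adjoint T : H →L[ℂ] H) : H →ₗ[ℂ] H) :=
    fun z => LinearMap.mem_ker.mpr (hTstarP z)
  have hPyth : ∀ z : H, ‖T (L z)‖ ^ 2 + ‖z - T (L z)‖ ^ 2 = ‖z‖ ^ 2 := by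
    intro z
    have horth : ⟪T (L z), z - T (L z)⟫_ℂ = 0 := by
      rw [← ContinuousLinearMap.adjoint_inner_right, hTstarP, inner_zero_right]
    have hns := norm_add_sq (𝕜 := ℂ) (T (L z)) (z - T (L z))
    rw [horth] at hns
    simp only [map_zero, mul_zero, add_zero] at hns
    have hzz : T (L z) + (z - T (L z)) = z := by abel
    rw [hzz] at hns
    linarith

  -- sequences
  set y : ℕ → H := fun n => (L ^ n) x with hydef
  have hy0 : y 0 = x := by simp [hydef]
  have hy_succ : ∀ n, y (n + 1) = L (y n) := fun n => pow_apply_succ L n x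
  set w : ℕ → H := fun n => (T ^ n) (y n) with hwdef
  set b : ℕ → ℝ := fun n => ‖y n‖ ^ 2 with hbdef
  set q : ℕ → ℝ := fun n => ‖T (y n)‖ ^ 2 - ‖y n‖ ^ 2 with hqdef
  have hq0 : ∀ n, 0 ≤ q n := fun n => by
    have := hexp (y n); simp only [hqdef]; linarith
  have hwnorm : ∀ n : ℕ, ‖w n‖ ^ 2 = b n + n * q n := by
    intro n
    simpa [hwdef, hbdef, hqdef] using twoIso_pow_norm_sq T h2 (y n) n
  have hkey : ∀ n, b (n + 1) + q (n + 1) ≤ b n := by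
    intro n
    have hp := hPyth (y n)
    have h1 : b (n + 1) + q (n + 1) = ‖T (y (n + 1))‖ ^ 2 := by
      simp only [hbdef, hqdef]; ring
    rw [h1, hy_succ n]
    have hb : b n = ‖y n‖ ^ 2 := rfl
    rw [hb]
    nlinarith [sq_nonneg ‖y n - T (L (y n))‖]
  have hbmono : ∀ n, b (n + 1) ≤ b n := fun n => by linarith [hkey n, hq0 (n + 1)]
  have hble : ∀ n, b n ≤ b 0 := by
    intro n
    induction n with
    | zero => exact le_refl _
    | succ n ih => linarith [hbmono n]
  have hbnn : ∀ n, 0 ≤ b n := fun n => sq_nonneg _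
  have hsum : ∀ n : ℕ, ∑ k ∈ Finset.range n, q (k + 1) ≤ b 0 := by
    intro n
    have key : ∀ m : ℕ, ∑ k ∈ Finset.range m, q (k + 1) ≤ b 0 - b m := by
      intro m
      induction m with
      | zero => simp
      | succ m ih =>
        rw [Finset.sum_range_succ]
        have := hkey m
        linarith
    linarith [key n, hbnn n]
  have hsummable : Summable fun k => q (k + 1) :=
    summable_of_sum_range_le (fun n => hq0 _) hsum
  -- frequently n * q n is small
  have hfreq : ∀ ε : ℝ, 0 < ε → ∀ N : ℕ, ∃ n : ℕ, N ≤ n ∧ (n : ℝ) * q n < ε := by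
    intro ε hε N
    by_contra hcon
    push_neg at hcon
    have h1 : ∀ n : ℕ, ε / ((n : ℝ) + N + 1) ≤ q (n + N + 1) := by
      intro n
      have hge := hcon (n + N + 1) (by omega)
      have hpos : (0 : ℝ) < (n : ℝ) + N + 1 := by positivity
      rw [div_le_iff₀ hpos]
      calc ε ≤ ((n + N + 1 : ℕ) : ℝ) * q (n + N + 1) := hge
        _ = q (n + N + 1) * ((n : ℝ) + N + 1) := by push_cast; ring
    have h2 : Summable fun n : ℕ => q (n + N + 1) := by
      have := (summable_nat_add_iff (f := fun k => q (k + 1)) N).mpr hsummable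
      apply this.congr
      intro n
      rfl
    have h3 : Summable fun n : ℕ => ε / ((n : ℝ) + N + 1) :=
      Summable.of_nonneg_of_le (fun n => by positivity) h1 h2
    have h4 : Summable fun n : ℕ => 1 / ((n : ℝ) + N + 1) := by
      have := h3.mul_left ε⁻¹
      apply this.congr
      intro n
      field_simp
    have h5 : Summable fun n : ℕ => 1 / ((n : ℝ)) := by
      have := (summable_nat_add_iff (f := fun k : ℕ => 1 / (k : ℝ)) (N + 1)).mp ?_
      · exact this
      · apply h4.congr
        intro n
        push_cast
        ring_nf
    exact Real.not_summable_one_div_natCast h5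

  -- decomposition x - w n ∈ span of T^k E
  have hdecomp : ∀ n : ℕ, x - w n = ∑ k ∈ Finset.range n, (T ^ k) (y k - T (L (y k))) := by
    intro n
    induction n with
    | zero => simp [hwdef, hy0]
    | succ n ih =>
      rw [Finset.sum_range_succ, ← ih]
      have h1 : w (n + 1) = (T ^ n) (T (L (y n))) := by
        show (T ^ (n + 1)) (y (n + 1)) = (T ^ n) (T (L (y n)))
        rw [pow_apply_succ' T n (y (n + 1)), hy_succ]
      rw [map_sub, ← h1]
      have h2 : (T ^ n) (y n) = w n := rfl
      rw [h2]
      abel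
  -- orthogonality: ⟪x - w n, x⟫ = 0
  have hinner0 : ∀ n : ℕ, ⟪x - w n, x⟫_ℂ = 0 := by
    intro n
    rw [hdecomp n, sum_inner]
    apply Finset.sum_eq_zero
    intro k _
    apply hx'
    exact le_iSup (fun m => Submodule.map (((T ^ m) : H →L[ℂ] H) : H →ₗ[ℂ] H) (LinearMap.ker ((adjoint T : H →L[ℂ] H) : H →ₗ[ℂ] H))) k
      (Submodule.mem_map_of_mem (hPmem (y k)))
  have hxw : ∀ n : ℕ, ‖x - w n‖ ^ 2 = ‖w n‖ ^ 2 - ‖x‖ ^ 2 := by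
    intro n
    have h1 : ⟪w n, x⟫_ℂ = ⟪x, x⟫_ℂ := by
      have := hinner0 n
      rw [inner_sub_left] at this
      linear_combination -this
    have h2 : ⟪x, w n⟫_ℂ = ((‖x‖ : ℂ)) ^ 2 := by
      have hc := congrArg (starRingEnd ℂ) h1
      rw [inner_conj_symm, inner_conj_symm] at hc
      rw [hc, inner_self_eq_norm_sq_to_K]
      norm_num
    have h4 : ⟪x - w n, x - w n⟫_ℂ = ⟪w n, w n⟫_ℂ - ⟪x, x⟫_ℂ := by
      rw [inner_sub_left, inner_sub_right, inner_sub_right, h1, h2,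
        inner_self_eq_norm_sq_to_K x]
      ring_nf
      norm_cast
    rw [inner_self_eq_norm_sq_to_K, inner_self_eq_norm_sq_to_K,
      inner_self_eq_norm_sq_to_K] at h4
    exact_mod_cast h4
  -- x is in the range of every power of T
  have hb0 : b 0 = ‖x‖ ^ 2 := by rw [hbdef]; simp [hy0]
  have hmem : ∀ m : ℕ, x ∈ LinearMap.range (((T ^ m) : H →L[ℂ] H) : H →ₗ[ℂ] H) := by
    intro m
    have hcl := twoIso_pow_range_closed T h2 m
    have hxcl : x ∈ closure (Set.range ⇑(T ^ m)) := by
      rw [Metric.mem_closure_iff]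
      intro ε hε
      obtain ⟨n, hn, hlt⟩ := hfreq (ε ^ 2) (by positivity) m
      refine ⟨w n, ?_, ?_⟩
      · -- w n ∈ range T^m since n ≥ m
        have h5op : (T ^ m) * (T ^ (n - m)) = T ^ n := by
          rw [← pow_add]
          congr 1
          omega
        refine ⟨(T ^ (n - m)) (y n), ?_⟩
        rw [← ContinuousLinearMap.mul_apply, h5op]
      · rw [dist_eq_norm]
        have h6 : ‖x - w n‖ ^ 2 ≤ (n : ℝ) * q n := by
          have := hxw n
          have h7 := hwnorm n
          have h8 := hble n
          rw [hb0] at h8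
          linarith
        nlinarith [norm_nonneg (x - w n)]
    have hxr : x ∈ Set.range ⇑(T ^ m) := by rwa [hcl.closure_eq] at hxcl
    obtain ⟨z, hz⟩ := hxr
    exact ⟨z, hz⟩
  have hx0 : x ∈ (⨅ n : ℕ, LinearMap.range (((T ^ n) : H →L[ℂ] H) : H →ₗ[ℂ] H)) :=
    (Submodule.mem_iInf _).mpr hmem
  rw [hana] at hx0
  exact hx0

end OneVar

set_option maxHeartbeats 1000000 in
/-- **two-variable wandering subspace property.** For a doubly
commuting pair of analytic 2-isometries `(T₁, T₂)`, the Hilbert space equals the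
closed span of `⋃_{m,n≥0} T₁^m T₂ⁿ(E)` where `E = ker T₁* ∩ ker T₂*`. -/
theorem doublyCommuting_analytic_twoIsometries_wandering_subspace_property
    {H : Type*} [NormedAddCommGroup H] [InnerProductSpace ℂ H] [CompleteSpace H]
    (T₁ T₂ : H →L[ℂ] H)
    (h2iso₁ : ∀ h : H, ‖T₁ (T₁ h)‖ ^ 2 - 2 * ‖T₁ h‖ ^ 2 + ‖h‖ ^ 2 = 0)
    (h2iso₂ : ∀ h : H, ‖T₂ (T₂ h)‖ ^ 2 - 2 * ‖T₂ h‖ ^ 2 + ‖h‖ ^ 2 = 0)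
    (hana₁ : (⨅ n : ℕ, LinearMap.range ((T₁ ^ n : H →L[ℂ] H) : H →ₗ[ℂ] H)) = ⊥)
    (hana₂ : (⨅ n : ℕ, LinearMap.range ((T₂ ^ n : H →L[ℂ] H) : H →ₗ[ℂ] H)) = ⊥)
    (hcomm : T₁ ∘L T₂ = T₂ ∘L T₁)
    (hdcomm : T₁ ∘L adjoint T₂ = adjoint T₂ ∘L T₁) :
    (⨆ p : ℕ × ℕ,
        (LinearMap.ker ((adjoint T₁ : H →L[ℂ] H) : H →ₗ[ℂ] H) ⊓
          LinearMap.ker ((adjoint T₂ : H →L[ℂ] H) : H →ₗ[ℂ] H)).map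
          (((T₁ ^ p.1) ∘L (T₂ ^ p.2) : H →L[ℂ] H) : H →ₗ[ℂ] H)).topologicalClosure = ⊤ := by
  classical
  set W : Submodule ℂ H := LinearMap.ker ((adjoint T₂ : H →L[ℂ] H) : H →ₗ[ℂ] H) with hWdef
  haveI : CompleteSpace W :=
    (ContinuousLinearMap.isClosed_ker (adjoint T₂)).completeSpace_coe
  have hTW : ∀ v : H, v ∈ W → T₁ v ∈ W := by
    intro v hv
    have h0 : adjoint T₂ v = 0 := hv
    have h1 : T₁ (adjoint T₂ v) = adjoint T₂ (T₁ v) := by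
      rw [← ContinuousLinearMap.comp_apply, hdcomm, ContinuousLinearMap.comp_apply]
    show adjoint T₂ (T₁ v) = 0
    rw [← h1, h0, map_zero]
  have hcomm' : adjoint T₂ ∘L adjoint T₁ = adjoint T₁ ∘L adjoint T₂ := by
    have h := congrArg ContinuousLinearMap.adjoint hcomm
    rwa [ContinuousLinearMap.adjoint_comp, ContinuousLinearMap.adjoint_comp] at h
  have hTsW : ∀ v : H, v ∈ W → adjoint T₁ v ∈ W := by
    intro v hv
    have h0 : adjoint T₂ v = 0 := hv
    show adjoint T₂ (adjoint T₁ v) = 0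
    rw [← ContinuousLinearMap.comp_apply, hcomm', ContinuousLinearMap.comp_apply,
      h0, map_zero]
  set T₁' : W →L[ℂ] W :=
    ContinuousLinearMap.codRestrict (T₁ ∘L W.subtypeL) W (fun v => hTW v v.2) with hT₁'def
  set T₁s : W →L[ℂ] W :=
    ContinuousLinearMap.codRestrict (adjoint T₁ ∘L W.subtypeL) W (fun v => hTsW v v.2)
    with hT₁sdef
  have hT₁'c : ∀ v : W, ((T₁' v : H)) = T₁ (v : H) := fun v => rfl
  have hT₁sc : ∀ v : W, ((T₁s v : H)) = adjoint T₁ (v : H) := fun v => rfl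
  have hadj : ContinuousLinearMap.adjoint T₁' = T₁s := by
    symm
    rw [ContinuousLinearMap.eq_adjoint_iff]
    intro a c
    rw [Submodule.coe_inner, Submodule.coe_inner, hT₁sc, hT₁'c]
    exact ContinuousLinearMap.adjoint_inner_left T₁ (c : H) (a : H)
  have hnormW : ∀ u : W, ‖u‖ = ‖(u : H)‖ := fun u => rfl
  have h2iso₁' : ∀ v : W, ‖T₁' (T₁' v)‖ ^ 2 - 2 * ‖T₁' v‖ ^ 2 + ‖v‖ ^ 2 = 0 := by
    intro v
    have e1 : ((T₁' (T₁' v)) : H) = T₁ (T₁ (v : H)) := by rw [hT₁'c, hT₁'c]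
    rw [hnormW (T₁' (T₁' v)), hnormW (T₁' v), hnormW v, e1, hT₁'c]
    exact h2iso₁ (v : H)
  have hpow1 : ∀ (n : ℕ) (v : W), (((T₁' ^ n) v : W) : H) = (T₁ ^ n) (v : H) := by
    intro n
    induction n with
    | zero => intro v; simp
    | succ n ih =>
      intro v
      rw [pow_apply_succ T₁' n v, pow_apply_succ T₁ n (v : H), hT₁'c, ih]
  have hana₁' : (⨅ n : ℕ, LinearMap.range ((T₁' ^ n : W →L[ℂ] W) : W →ₗ[ℂ] W)) = ⊥ := by
    rw [eq_bot_iff]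
    intro v hv
    have hvH : (v : H) ∈ ⨅ n : ℕ, LinearMap.range ((T₁ ^ n : H →L[ℂ] H) : H →ₗ[ℂ] H) := by
      rw [Submodule.mem_iInf]
      intro n
      obtain ⟨u, hu⟩ := (Submodule.mem_iInf _).mp hv n
      exact ⟨(u : H), (hpow1 n u).symm.trans (congrArg Subtype.val hu)⟩
    rw [hana₁] at hvH
    have h0 : (v : H) = 0 := hvH
    exact (Submodule.mem_bot ℂ).mpr (Subtype.ext h0)
  have hWthm := richter_wandering T₁' h2iso₁' hana₁'
  have hHthm := richter_wandering T₂ h2iso₂ hana₂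
  -- main argument
  rw [Submodule.topologicalClosure_eq_top_iff, Submodule.eq_bot_iff]
  intro x hx
  have hx' : ∀ v ∈ (⨆ p : ℕ × ℕ,
      (LinearMap.ker ((adjoint T₁ : H →L[ℂ] H) : H →ₗ[ℂ] H) ⊓ LinearMap.ker ((adjoint T₂ : H →L[ℂ] H) : H →ₗ[ℂ] H)).map
        (((T₁ ^ p.1) ∘L (T₂ ^ p.2) : H →L[ℂ] H) : H →ₗ[ℂ] H)), ⟪v, x⟫_ℂ = 0 :=
    (Submodule.mem_orthogonal _ x).mp hx
  have hcommC : Commute T₁ T₂ := hcomm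
  have stepA : ∀ (n : ℕ) (w0 : W), ⟪x, (T₂ ^ n) (w0 : H)⟫_ℂ = 0 := by
    intro n w0
    set g : W →L[ℂ] ℂ := (innerSL ℂ x) ∘L ((T₂ ^ n) ∘L W.subtypeL) with hgdef
    have hgker : (⨆ m : ℕ,
        (LinearMap.ker ((ContinuousLinearMap.adjoint T₁' : W →L[ℂ] W) : W →ₗ[ℂ] W)).map ((T₁' ^ m : W →L[ℂ] W) : W →ₗ[ℂ] W))
          ≤ LinearMap.ker (g : W →ₗ[ℂ] ℂ) := by
      rw [iSup_le_iff]
      intro m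
      rintro v ⟨u, hu, rfl⟩
      rw [LinearMap.mem_ker]
      show (innerSL ℂ x) ((T₂ ^ n) (((T₁' ^ m) u : W) : H)) = 0
      rw [hpow1 m u]
      have hc : (T₂ ^ n) ((T₁ ^ m) (u : H)) = ((T₁ ^ m) ∘L (T₂ ^ n)) (u : H) := by
        have hcp := (hcommC.symm.pow_pow n m)
        calc (T₂ ^ n) ((T₁ ^ m) (u : H)) = ((T₂ ^ n) * (T₁ ^ m)) (u : H) :=
              (ContinuousLinearMap.mul_apply _ _ _).symm
          _ = ((T₁ ^ m) * (T₂ ^ n)) (u : H) := by rw [hcp]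
          _ = ((T₁ ^ m) ∘L (T₂ ^ n)) (u : H) := rfl
      rw [hc, innerSL_apply_apply]
      have huE : (u : H) ∈ LinearMap.ker ((adjoint T₁ : H →L[ℂ] H) : H →ₗ[ℂ] H) ⊓ LinearMap.ker ((adjoint T₂ : H →L[ℂ] H) : H →ₗ[ℂ] H) := by
        refine Submodule.mem_inf.mpr ⟨?_, u.2⟩
        have h0 : ContinuousLinearMap.adjoint T₁' u = 0 := hu
        rw [hadj] at h0
        have h1 : ((T₁s u : W) : H) = 0 := by rw [h0]; rfl
        rw [hT₁sc] at h1
        exact LinearMap.mem_ker.mpr h1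
      have hmemM : ((T₁ ^ m) ∘L (T₂ ^ n)) (u : H) ∈ (⨆ p : ℕ × ℕ,
          (LinearMap.ker ((adjoint T₁ : H →L[ℂ] H) : H →ₗ[ℂ] H) ⊓ LinearMap.ker ((adjoint T₂ : H →L[ℂ] H) : H →ₗ[ℂ] H)).map
            (((T₁ ^ p.1) ∘L (T₂ ^ p.2) : H →L[ℂ] H) : H →ₗ[ℂ] H)) :=
        le_iSup (fun p : ℕ × ℕ =>
          (LinearMap.ker ((adjoint T₁ : H →L[ℂ] H) : H →ₗ[ℂ] H) ⊓ LinearMap.ker ((adjoint T₂ : H →L[ℂ] H) : H →ₗ[ℂ] H)).map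
            (((T₁ ^ p.1) ∘L (T₂ ^ p.2) : H →L[ℂ] H) : H →ₗ[ℂ] H)) (m, n) (Submodule.mem_map_of_mem huE)
      exact inner_eq_zero_symm.mp (hx' _ hmemM)
    have hgtop : LinearMap.ker (g : W →ₗ[ℂ] ℂ) = ⊤ := by
      rw [eq_top_iff]
      have h1 := Submodule.topologicalClosure_minimal _ hgker
        (ContinuousLinearMap.isClosed_ker g)
      rwa [hWthm] at h1
    have h2 : w0 ∈ LinearMap.ker (g : W →ₗ[ℂ] ℂ) := by rw [hgtop]; trivial
    have h3 : g w0 = 0 := LinearMap.mem_ker.mp h2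
    rw [hgdef, ContinuousLinearMap.comp_apply, ContinuousLinearMap.comp_apply,
      Submodule.subtypeL_apply, innerSL_apply_apply] at h3
    exact h3
  -- step B
  have hker2 : (⨆ n : ℕ, (LinearMap.ker ((adjoint T₂ : H →L[ℂ] H) : H →ₗ[ℂ] H)).map ((T₂ ^ n : H →L[ℂ] H) : H →ₗ[ℂ] H))
      ≤ LinearMap.ker ((innerSL ℂ x : H →L[ℂ] ℂ) : H →ₗ[ℂ] ℂ) := by
    rw [iSup_le_iff]
    intro n
    rintro v ⟨u, hu, rfl⟩
    rw [LinearMap.mem_ker]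
    show (innerSL ℂ x) ((T₂ ^ n) u) = 0
    rw [innerSL_apply_apply]
    exact stepA n ⟨u, hu⟩
  have hktop : LinearMap.ker ((innerSL ℂ x : H →L[ℂ] ℂ) : H →ₗ[ℂ] ℂ) = ⊤ := by
    rw [eq_top_iff]
    have h1 := Submodule.topologicalClosure_minimal _ hker2
      (ContinuousLinearMap.isClosed_ker (innerSL ℂ x))
    rwa [hHthm] at h1
  have hxx : x ∈ LinearMap.ker ((innerSL ℂ x : H →L[ℂ] ℂ) : H →ₗ[ℂ] ℂ) := by rw [hktop]; trivial
  have : ⟪x, x⟫_ℂ = 0 := by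
    have h := LinearMap.mem_ker.mp hxx
    rwa [ContinuousLinearMap.coe_coe, innerSL_apply_apply] at h
  exact (Submodule.mem_bot ℂ).mpr (inner_self_eq_zero.mp this)
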